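/- Let p be a probability density on ℝ^d such that ∫_{ℝ^d} e^{⟨w,z⟩} p(z) dz < ∞ for every w ∈ ℝ^d, and let q be a probability density on ℝ^d for which there exists a unit vector u ∈ ℝ^d with ∫_{ℝ^d} e^{κ⟨u,x⟩} q(x) dx = ∞ for every κ > 0. If T : ℝ^d → ℝ^d is a differentiable map with q = T#p, then there exists an index i ∈ {1,…,d} such that the gradient of the i-th component T_i of T is unbounded: sup_{z ∈ ℝ^d} ‖∇T_i(z)‖ = ∞. -/

import Mathlib

open MeasureTheory Filter Topology Set

lemma euclidean_norm_le_sum_abs {d : ℕ} (y : EuclideanSpace ℝ (Fin d)) :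
    ‖y‖ ≤ ∑ i, |y i| := by
  rw [EuclideanSpace.norm_eq]
  have h : ∑ i, ‖y i‖ ^ 2 ≤ (∑ i, |y i|) ^ 2 := by
    simp only [Real.norm_eq_abs]
    exact Finset.sum_sq_le_sq_sum_of_nonneg (fun i _ => abs_nonneg _)
  calc Real.sqrt (∑ i, ‖y i‖^2) ≤ Real.sqrt ((∑ i, |y i|)^2) := Real.sqrt_le_sqrt h
    _ = ∑ i, |y i| := Real.sqrt_sq (Finset.sum_nonneg fun i _ => abs_nonneg _)

/-- Let `p` be a probability density on ℝ^d with all directional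
exponential moments finite (`∫ e^{⟨w,z⟩} p(z) dz < ∞` for every `w`), and `q` a
probability density that is heavy-tailed in some unit direction `u`
(`∫ e^{κ⟨u,x⟩} q(x) dx = ∞` for every `κ > 0`). If `T : ℝ^d → ℝ^d` is differentiable
with `q = T#p`, then some component `T_i` has unbounded gradient. -/
theorem heavy_tailed_pushforward_component_gradient_unbounded
    {d : ℕ} (p q : EuclideanSpace ℝ (Fin d) → ℝ)
    (T : EuclideanSpace ℝ (Fin d) → EuclideanSpace ℝ (Fin d))
    (u : EuclideanSpace ℝ (Fin d))
    (hp_meas : Measurable p) (hp_nonneg : ∀ z, 0 ≤ p z)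
    (hp_prob : ∫⁻ z, ENNReal.ofReal (p z) = 1)
    (hq_meas : Measurable q) (hq_nonneg : ∀ x, 0 ≤ q x)
    (hq_prob : ∫⁻ x, ENNReal.ofReal (q x) = 1)
    (hp_exp : ∀ w : EuclideanSpace ℝ (Fin d),
      ∫⁻ z, ENNReal.ofReal (Real.exp (inner ℝ w z : ℝ) * p z) < ⊤)
    (hu : ‖u‖ = 1)
    (hq_heavy : ∀ κ > (0:ℝ),
      ∫⁻ x, ENNReal.ofReal (Real.exp (κ * (inner ℝ u x : ℝ)) * q x) = ⊤)
    (hT_diff : Differentiable ℝ T)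
    (hpush : Measure.map T (volume.withDensity fun z => ENNReal.ofReal (p z))
      = volume.withDensity fun x => ENNReal.ofReal (q x)) :
    ∃ i : Fin d, ∀ C : ℝ, ∃ z : EuclideanSpace ℝ (Fin d),
      C < ‖fderiv ℝ (fun w => T w i) z‖ := by
  by_contra hcon
  push_neg at hcon
  choose C hC using hcon
  set L : ℝ := ∑ i, max (C i) 0 with hLdef
  have hL0 : 0 ≤ L := Finset.sum_nonneg fun i _ => le_max_right _ _
  -- component derivative
  have hcomp : ∀ (i : Fin d) (z : EuclideanSpace ℝ (Fin d)),
      fderiv ℝ (fun w => T w i) z = (EuclideanSpace.proj i).comp (fderiv ℝ T z) := by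
    intro i z
    have h : (fun w => T w i) = (EuclideanSpace.proj i) ∘ T := rfl
    rw [h, fderiv_comp z (EuclideanSpace.proj i).differentiableAt (hT_diff z),
      ContinuousLinearMap.fderiv]
  -- operator norm bound
  have hop : ∀ z, ‖fderiv ℝ T z‖ ≤ L := by
    intro z
    refine ContinuousLinearMap.opNorm_le_bound _ hL0 (fun v => ?_)
    calc ‖fderiv ℝ T z v‖ ≤ ∑ i, |(fderiv ℝ T z v) i| := euclidean_norm_le_sum_abs _
      _ ≤ ∑ i, max (C i) 0 * ‖v‖ := by
          refine Finset.sum_le_sum fun i _ => ?_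
          have h1 : |(fderiv ℝ T z v) i| = ‖fderiv ℝ (fun w => T w i) z v‖ := by
            rw [hcomp i z]; rfl
          rw [h1]
          calc ‖fderiv ℝ (fun w => T w i) z v‖
              ≤ ‖fderiv ℝ (fun w => T w i) z‖ * ‖v‖ :=
                ContinuousLinearMap.le_opNorm _ _
            _ ≤ max (C i) 0 * ‖v‖ :=
                mul_le_mul_of_nonneg_right ((hC i z).trans (le_max_left _ _)) (norm_nonneg _)
      _ = L * ‖v‖ := (Finset.sum_mul _ _ _).symm
  -- Lipschitz bound
  have hlip : ∀ z : EuclideanSpace ℝ (Fin d), ‖T z - T 0‖ ≤ L * ‖z‖ := by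
    intro z
    have := Convex.norm_image_sub_le_of_norm_fderiv_le
      (fun x _ => (hT_diff x)) (fun x (_ : x ∈ Set.univ) => hop x)
      convex_univ (Set.mem_univ 0) (Set.mem_univ z)
    simpa using this
  set M : ℝ := ‖T 0‖ with hMdef
  have hTz : ∀ z, (inner ℝ u (T z) : ℝ) ≤ M + L * ‖z‖ := by
    intro z
    have h1 : (inner ℝ u (T z) : ℝ) ≤ ‖u‖ * ‖T z‖ := real_inner_le_norm _ _
    have h2 : ‖T z‖ - ‖T 0‖ ≤ ‖T z - T 0‖ := norm_sub_norm_le _ _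
    have := hlip z
    rw [hu, one_mul] at h1
    simp only [hMdef]
    linarith
  -- sign vectors
  set w : Finset (Fin d) → EuclideanSpace ℝ (Fin d) :=
    fun t => WithLp.toLp 2 (fun i => if i ∈ t then L else -L) with hwdef
  have hinner : ∀ (t : Finset (Fin d)) z,
      (inner ℝ (w t) z : ℝ) = ∑ i ∈ t, L * z i + ∑ i ∈ tᶜ, -L * z i := by
    intro t z
    rw [PiLp.inner_apply, ← Finset.sum_add_sum_compl t]
    simp only [RCLike.inner_apply, starRingEnd_apply, star_trivial]
    congr 1
    · exact Finset.sum_congr rfl fun i hi => by simp [hwdef, hi, mul_comm]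
    · exact Finset.sum_congr rfl fun i hi => by simp [hwdef, Finset.mem_compl.1 hi, mul_comm]
  -- exponential bound
  have hexp : ∀ z : EuclideanSpace ℝ (Fin d),
      Real.exp (L * ‖z‖) ≤ ∑ t ∈ (Finset.univ : Finset (Fin d)).powerset,
        Real.exp (inner ℝ (w t) z : ℝ) := by
    intro z
    calc Real.exp (L * ‖z‖) ≤ Real.exp (∑ i, L * |z i|) := by
          rw [Real.exp_le_exp, ← Finset.mul_sum]
          exact mul_le_mul_of_nonneg_left (euclidean_norm_le_sum_abs z) hL0
      _ = ∏ i, Real.exp (L * |z i|) := by rw [Real.exp_sum]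
      _ ≤ ∏ i, (Real.exp (L * z i) + Real.exp (-L * z i)) := by
          refine Finset.prod_le_prod (fun i _ => (Real.exp_pos _).le) (fun i _ => ?_)
          rcases abs_cases (z i) with ⟨h, _⟩ | ⟨h, _⟩
          · rw [h]; nlinarith [Real.exp_pos (-L * z i)]
          · rw [h]
            have : L * -z i = -L * z i := by ring
            rw [this]
            nlinarith [Real.exp_pos (L * z i)]
      _ = ∑ t ∈ (Finset.univ : Finset (Fin d)).powerset,
            (∏ i ∈ t, Real.exp (L * z i)) * ∏ i ∈ Finset.univ \ t, Real.exp (-L * z i) :=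
          Finset.prod_add _ _ _
      _ = ∑ t ∈ (Finset.univ : Finset (Fin d)).powerset, Real.exp (inner ℝ (w t) z : ℝ) := by
          refine Finset.sum_congr rfl fun t _ => ?_
          rw [← Real.exp_sum, ← Real.exp_sum, ← Real.exp_add, hinner t z,
            Finset.compl_eq_univ_sdiff]
  -- measurability facts
  have hTmeas : Measurable T := hT_diff.continuous.measurable
  have hfmeas : ∀ v : EuclideanSpace ℝ (Fin d),
      Measurable fun x : EuclideanSpace ℝ (Fin d) =>
        ENNReal.ofReal (Real.exp (inner ℝ v x : ℝ)) := fun v =>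
    ((Real.continuous_exp.comp (continuous_const.inner continuous_id)).measurable).ennreal_ofReal
  -- transfer the heavy tail through the pushforward
  have h1 : ∫⁻ x, ENNReal.ofReal (Real.exp (inner ℝ u x : ℝ))
      ∂(volume.withDensity fun x => ENNReal.ofReal (q x)) = ⊤ := by
    rw [lintegral_withDensity_eq_lintegral_mul _ hq_meas.ennreal_ofReal (hfmeas u)]
    have hh := hq_heavy 1 one_pos
    simp only [one_mul] at hh
    rw [← hh]
    refine lintegral_congr fun x => ?_
    simp only [Pi.mul_apply]
    rw [ENNReal.ofReal_mul (Real.exp_pos _).le, mul_comm]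
  have h2 : ∫⁻ z, ENNReal.ofReal (Real.exp (inner ℝ u (T z) : ℝ))
      ∂(volume.withDensity fun z => ENNReal.ofReal (p z)) = ⊤ := by
    rw [← hpush, lintegral_map (hfmeas u) hTmeas] at h1
    exact h1
  have hgmeas : Measurable fun z : EuclideanSpace ℝ (Fin d) =>
      ENNReal.ofReal (Real.exp (inner ℝ u (T z) : ℝ)) :=
    ((Real.continuous_exp.comp
      (continuous_const.inner hT_diff.continuous)).measurable).ennreal_ofReal
  have h3 : ∫⁻ z, ENNReal.ofReal (Real.exp (inner ℝ u (T z) : ℝ) * p z) = ⊤ := by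
    rw [lintegral_withDensity_eq_lintegral_mul _ hp_meas.ennreal_ofReal hgmeas] at h2
    rw [← h2]
    refine lintegral_congr fun z => ?_
    simp only [Pi.mul_apply]
    rw [ENNReal.ofReal_mul (Real.exp_pos _).le, mul_comm]
  -- bound the integral by a finite sum of finite integrals
  have hterm_meas : ∀ t : Finset (Fin d),
      Measurable fun z : EuclideanSpace ℝ (Fin d) =>
        ENNReal.ofReal (Real.exp M * (Real.exp (inner ℝ (w t) z : ℝ) * p z)) := by
    intro t
    exact ((measurable_const.mul
      (((Real.continuous_exp.comp (continuous_const.inner continuous_id)).measurable).mul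
        hp_meas))).ennreal_ofReal
  have h4 : ∫⁻ z, ENNReal.ofReal (Real.exp (inner ℝ u (T z) : ℝ) * p z)
      ≤ ∑ t ∈ (Finset.univ : Finset (Fin d)).powerset,
        ∫⁻ z, ENNReal.ofReal (Real.exp M * (Real.exp (inner ℝ (w t) z : ℝ) * p z)) := by
    rw [← lintegral_finset_sum _ (fun t _ => hterm_meas t)]
    refine lintegral_mono fun z => ?_
    have hreal : Real.exp (inner ℝ u (T z) : ℝ) * p z
        ≤ ∑ t ∈ (Finset.univ : Finset (Fin d)).powerset,
          Real.exp M * (Real.exp (inner ℝ (w t) z : ℝ) * p z) := by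
      have he : Real.exp (inner ℝ u (T z) : ℝ)
          ≤ Real.exp M * ∑ t ∈ (Finset.univ : Finset (Fin d)).powerset,
            Real.exp (inner ℝ (w t) z : ℝ) := by
        calc Real.exp (inner ℝ u (T z) : ℝ) ≤ Real.exp (M + L * ‖z‖) := by
              rw [Real.exp_le_exp]; exact hTz z
          _ = Real.exp M * Real.exp (L * ‖z‖) := Real.exp_add _ _
          _ ≤ _ := mul_le_mul_of_nonneg_left (hexp z) (Real.exp_pos _).le
      calc Real.exp (inner ℝ u (T z) : ℝ) * p z
          ≤ (Real.exp M * ∑ t ∈ (Finset.univ : Finset (Fin d)).powerset,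
              Real.exp (inner ℝ (w t) z : ℝ)) * p z :=
            mul_le_mul_of_nonneg_right he (hp_nonneg z)
        _ = ∑ t ∈ (Finset.univ : Finset (Fin d)).powerset,
              Real.exp M * (Real.exp (inner ℝ (w t) z : ℝ) * p z) := by
            rw [Finset.mul_sum, Finset.sum_mul]
            exact Finset.sum_congr rfl fun t _ => by ring
    calc ENNReal.ofReal (Real.exp (inner ℝ u (T z) : ℝ) * p z)
        ≤ ENNReal.ofReal (∑ t ∈ (Finset.univ : Finset (Fin d)).powerset,
            Real.exp M * (Real.exp (inner ℝ (w t) z : ℝ) * p z)) :=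
          ENNReal.ofReal_le_ofReal hreal
      _ = ∑ t ∈ (Finset.univ : Finset (Fin d)).powerset,
            ENNReal.ofReal (Real.exp M * (Real.exp (inner ℝ (w t) z : ℝ) * p z)) :=
          ENNReal.ofReal_sum_of_nonneg fun t _ =>
            mul_nonneg (Real.exp_pos _).le (mul_nonneg (Real.exp_pos _).le (hp_nonneg z))
  have h5 : ∀ t : Finset (Fin d),
      ∫⁻ z, ENNReal.ofReal (Real.exp M * (Real.exp (inner ℝ (w t) z : ℝ) * p z)) < ⊤ := by
    intro t
    have heq : (fun z : EuclideanSpace ℝ (Fin d) =>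
        ENNReal.ofReal (Real.exp M * (Real.exp (inner ℝ (w t) z : ℝ) * p z)))
        = fun z => ENNReal.ofReal (Real.exp M)
            * ENNReal.ofReal (Real.exp (inner ℝ (w t) z : ℝ) * p z) := by
      funext z
      rw [ENNReal.ofReal_mul (Real.exp_pos _).le]
    rw [heq, lintegral_const_mul' _ _ ENNReal.ofReal_ne_top]
    exact ENNReal.mul_lt_top ENNReal.ofReal_lt_top (hp_exp (w t))
  have h6 : (⊤ : ENNReal) < ⊤ := by
    calc (⊤ : ENNReal) = ∫⁻ z, ENNReal.ofReal (Real.exp (inner ℝ u (T z) : ℝ) * p z) := h3.symm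
      _ ≤ _ := h4
      _ < ⊤ := ENNReal.sum_lt_top.2 fun t _ => h5 t
  exact absurd h6 (lt_irrefl _)
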